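/- Let Ω be a nonempty subset of ℝ^n, let L_0, …, L_m : ℝ^n → ℝ, and let a ∈ ℝ^{m+1} satisfy a_i < L_i(x) for all x ∈ Ω and all i. If x* ∈ Ω is weakly Pareto optimal, then x* minimizes over Ω the weighted Chebyshev objective φ_k(x) = max_{0≤i≤m} k_i (L_i(x) − a_i) for the importance vector defined by k_i = (L_i(x*) − a_i)^{-1} / Σ_{j=0}^m (L_j(x*) − a_j)^{-1} (which satisfies k_i > 0 and Σ_i k_i = 1). Hence every weakly Pareto optimal point is an optimal solution of the weighted Chebyshev scalarization for a suitable positive importance vector. -/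
import Mathlib


/-- Every weakly Pareto optimal point `x*` minimizes the
weighted Chebyshev objective for the importance vector
`k_i = (L_i(x*) - a_i)⁻¹ / ∑_j (L_j(x*) - a_j)⁻¹`, which is positive and
sums to one. -/
theorem weaklyParetoOptimal_minimizes_weightedChebyshev
    (n m : ℕ) (Ω : Set (Fin n → ℝ))
    (L : Fin (m + 1) → (Fin n → ℝ) → ℝ)
    (a : Fin (m + 1) → ℝ)
    (hΩ : Ω.Nonempty)
    (ha : ∀ x ∈ Ω, ∀ i, a i < L i x)
    (xstar : Fin n → ℝ) (hxstar : xstar ∈ Ω)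
    (hweak : ¬ ∃ x' ∈ Ω, ∀ i, L i x' < L i xstar)
    (k : Fin (m + 1) → ℝ)
    (hkdef : ∀ i, k i = (L i xstar - a i)⁻¹ / ∑ j, (L j xstar - a j)⁻¹) :
    (∀ i, 0 < k i) ∧ (∑ i, k i = 1) ∧
      ∀ x ∈ Ω,
        Finset.univ.sup' Finset.univ_nonempty (fun i => k i * (L i xstar - a i)) ≤
          Finset.univ.sup' Finset.univ_nonempty (fun i => k i * (L i x - a i)) := by
  have hpos : ∀ i, 0 < L i xstar - a i := fun i => sub_pos.mpr (ha xstar hxstar i)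
  have hS : 0 < ∑ j, (L j xstar - a j)⁻¹ :=
    Finset.sum_pos (fun j _ => inv_pos.mpr (hpos j)) Finset.univ_nonempty
  have hk : ∀ i, 0 < k i := fun i => by
    rw [hkdef i]; exact div_pos (inv_pos.mpr (hpos i)) hS
  have hconst : ∀ i, k i * (L i xstar - a i) = (∑ j, (L j xstar - a j)⁻¹)⁻¹ := by
    intro i
    rw [hkdef i, div_mul_eq_mul_div, inv_mul_cancel₀ (ne_of_gt (hpos i)), one_div]
  refine ⟨hk, ?_, ?_⟩
  · simp only [hkdef]
    rw [← Finset.sum_div, div_self (ne_of_gt hS)]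
  · intro x hx
    push_neg at hweak
    obtain ⟨i, hi⟩ := hweak x hx
    calc Finset.univ.sup' Finset.univ_nonempty (fun i => k i * (L i xstar - a i))
        ≤ k i * (L i x - a i) := by
          apply Finset.sup'_le
          intro j _
          rw [hconst j, ← hconst i]
          exact mul_le_mul_of_nonneg_left (by linarith) (le_of_lt (hk i))
      _ ≤ _ := Finset.le_sup' (fun j => k j * (L j x - a j)) (Finset.mem_univ i)
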